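/- arXiv:1106.0605 — 3 statements merged into one kernel-verified Lean document; each statement's English description precedes it below -/
import Mathlib

section
/- Every finite connected simple graph G has a spanning tree T and an alternating sign on T, i.e., a labelling φ : E(T) → {+, −} such that for every cotree edge e ∈ E(G) \ E(T), the unique path v₀, v₁, …, v_ℓ in T joining the two endpoints of e satisfies φ(v_i v_{i+1}) ≠ φ(v_{i+1} v_{i+2}) for all i = 0, 1, …, ℓ − 2. -/
open SimpleGraph

section AltSignAux

variable {V : Type*}

/-- From parent/depth data with the step property, the root is an iterated-parent
ancestor of every reachable vertex. -/
private lemma alt_root_anc (G : SimpleGraph V) (r : V) (p : V → V) (d : V → ℕ)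
    (hstep : ∀ v, v ≠ r → G.Reachable r v → G.Adj (p v) v ∧ d (p v) + 1 = d v) :
    ∀ v, G.Reachable r v → ∃ k, p^[k] v = r := by
  have key : ∀ (N : ℕ) (v : V), d v ≤ N → G.Reachable r v → ∃ k, p^[k] v = r := by
    intro N
    induction N using Nat.strong_induction_on with
    | _ N ih =>
      intro v hdv hv
      by_cases hvr : v = r
      · exact ⟨0, hvr⟩
      · obtain ⟨hadj, hd⟩ := hstep v hvr hv
        have hreach : G.Reachable r (p v) := hv.trans hadj.symm.reachable
        obtain ⟨k, hk⟩ := ih (d (p v)) (by omega) (p v) le_rfl hreach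
        exact ⟨k + 1, by rwa [Function.iterate_succ_apply]⟩
  exact fun v hv => key (d v) v le_rfl hv

private lemma alt_isolated (G : SimpleGraph V) (r : V) (h : ∀ x, ¬ G.Adj r x) :
    ∀ v, G.Reachable r v → v = r := by
  intro v hv
  obtain ⟨w⟩ := hv
  cases w with
  | nil => rfl
  | cons h' _ => exact absurd h' (h _)

private lemma alt_trivial_forest (G : SimpleGraph V) (r : V) (h : ∀ x, ¬ G.Adj r x) :
    ∃ (p : V → V) (d : V → ℕ),
      p r = r ∧ d r = 0 ∧
      (∀ v, v ≠ r → G.Reachable r v → G.Adj (p v) v ∧ d (p v) + 1 = d v) ∧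
      (∀ u v, G.Adj u v → G.Reachable r u → u ≠ r → v ≠ r →
        (∃ k, p^[k] v = u) ∨ (∃ k, p^[k] u = v)) := by
  refine ⟨id, fun _ => 0, rfl, rfl, ?_, ?_⟩
  · intro v hv hrv
    exact absurd (alt_isolated G r h v hrv) hv
  · intro u v _ hru hur _
    exact absurd (alt_isolated G r h u hru) hur

/-- Existence of a "normal forest": a parent function `p` and depth `d` rooted at `r`,
covering all vertices reachable from `r`, such that every edge of `G` between reachable
non-root vertices joins an ancestor/descendant pair. -/
private lemma alt_normal_forest [Fintype V] :
    ∀ (n : ℕ) (G : SimpleGraph V), G.edgeSet.ncard ≤ n → ∀ r : V,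
    ∃ (p : V → V) (d : V → ℕ),
      p r = r ∧ d r = 0 ∧
      (∀ v, v ≠ r → G.Reachable r v → G.Adj (p v) v ∧ d (p v) + 1 = d v) ∧
      (∀ u v, G.Adj u v → G.Reachable r u → u ≠ r → v ≠ r →
        (∃ k, p^[k] v = u) ∨ (∃ k, p^[k] u = v)) := by
  intro n
  induction n with
  | zero =>
    intro G hn r
    refine alt_trivial_forest G r ?_
    intro x hx
    have h1 : G.edgeSet.Nonempty := ⟨s(r, x), hx⟩
    have h2 := (Set.ncard_pos (G.edgeSet.toFinite)).mpr h1
    omega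
  | succ n ih =>
    intro G hn r
    classical
    by_cases hr : ∃ x, G.Adj r x
    · obtain ⟨x₀, hx₀⟩ := hr
      set G' : SimpleGraph V :=
        { Adj := fun a b => G.Adj a b ∧ a ≠ r ∧ b ≠ r,
          symm := ⟨fun a b h => ⟨h.1.symm, h.2.2, h.2.1⟩⟩,
          loopless := ⟨fun a h => G.loopless.irrefl a h.1⟩ } with hG'def
      have hG'adj : ∀ {a b}, G'.Adj a b ↔ (G.Adj a b ∧ a ≠ r ∧ b ≠ r) := Iff.rfl
      have hle : G' ≤ G := fun a b h => h.1
      have hss : G'.edgeSet ⊂ G.edgeSet := by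
        constructor
        · exact SimpleGraph.edgeSet_mono hle
        · intro hsup
          have h1 : s(r, x₀) ∈ G.edgeSet := hx₀
          have h2 : s(r, x₀) ∈ G'.edgeSet := hsup h1
          exact (G'.mem_edgeSet.mp h2).2.1 rfl
      have hcard : G'.edgeSet.ncard ≤ n := by
        have := Set.ncard_lt_ncard hss (G.edgeSet.toFinite)
        omega
      choose P D hPr hDr hPstep hPnorm using ih G' hcard
      -- walks in G' starting at non-root stay at non-root
      have hG'nerW : ∀ (x w : V), G'.Walk x w → x ≠ r → w ≠ r := by
        intro x w W
        induction W with
        | nil => exact fun h => h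
        | cons h _ ihW => exact fun _ => ihW h.2.2
      have hG'ner : ∀ {x w : V}, x ≠ r → G'.Reachable x w → w ≠ r :=
        fun hx hxw => hxw.elim fun W => hG'nerW _ _ W hx
      -- every reachable non-root vertex is G'-reachable from some neighbor of r
      have hrep0 : ∀ {v w : V} (W : G.Walk v w), w = r → v ≠ r →
          ∃ x, G.Adj r x ∧ G'.Reachable x v := by
        intro v w W
        induction W with
        | nil => intro h hv; exact absurd h hv
        | @cons a b c h W ihW =>
          intro hw hv
          by_cases hbr : b = r
          · subst hbr
            exact ⟨a, h.symm, Reachable.refl a⟩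
          · obtain ⟨x, hx1, hx2⟩ := ihW hw hbr
            exact ⟨x, hx1, hx2.trans (SimpleGraph.Adj.reachable ⟨h.symm, hbr, hv⟩)⟩
      set comp : V → G'.ConnectedComponent := fun v => G'.connectedComponentMk v with hcompdef
      set rep : G'.ConnectedComponent → V := fun C =>
        if h : ∃ x, G.Adj r x ∧ G'.connectedComponentMk x = C then h.choose else r
        with hrepdef
      have hrep : ∀ v, v ≠ r → G.Reachable r v →
          G.Adj r (rep (comp v)) ∧ G'.Reachable (rep (comp v)) v := by
        intro v hv hrv
        obtain ⟨W⟩ := hrv.symm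
        obtain ⟨x, hx1, hx2⟩ := hrep0 W rfl hv
        have hex : ∃ y, G.Adj r y ∧ G'.connectedComponentMk y = comp v :=
          ⟨x, hx1, ConnectedComponent.sound hx2⟩
        have hrc : rep (comp v) = hex.choose := by
          rw [hrepdef]; exact dif_pos hex
        obtain ⟨hc1, hc2⟩ := hex.choose_spec
        rw [hrc]
        exact ⟨hc1, ConnectedComponent.exact hc2⟩
      set p : V → V := fun v =>
        if v ≠ r ∧ G.Reachable r v then
          (if v = rep (comp v) then r else P (rep (comp v)) v) else v with hpdef
      set d : V → ℕ := fun v =>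
        if v ≠ r ∧ G.Reachable r v then D (rep (comp v)) v + 1 else 0 with hddef
      have hpr : p r = r := by simp [hpdef]
      have hdr : d r = 0 := by simp [hddef]
      have hpv : ∀ v, v ≠ r → G.Reachable r v →
          p v = if v = rep (comp v) then r else P (rep (comp v)) v := by
        intro v h1 h2; simp [hpdef, h1, h2]
      have hdv : ∀ v, v ≠ r → G.Reachable r v → d v = D (rep (comp v)) v + 1 := by
        intro v h1 h2; simp [hddef, h1, h2]
      -- step property
      have step : ∀ v, v ≠ r → G.Reachable r v → G.Adj (p v) v ∧ d (p v) + 1 = d v := by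
        intro v hv hrv
        obtain ⟨hradj, hxreach⟩ := hrep v hv hrv
        rw [hpv v hv hrv, hdv v hv hrv]
        by_cases hvx : v = rep (comp v)
        · rw [if_pos hvx]
          refine ⟨by rw [hvx]; exact hradj, ?_⟩
          have : D (rep (comp v)) v = 0 := by rw [← hvx]; exact hDr v
          rw [hdr, this]
        · rw [if_neg hvx]
          obtain ⟨hadj', hd'⟩ := hPstep (rep (comp v)) v hvx hxreach
          refine ⟨hadj'.1, ?_⟩
          have hYr : P (rep (comp v)) v ≠ r := hadj'.2.1
          have hYreach : G.Reachable r (P (rep (comp v)) v) :=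
            hrv.trans hadj'.1.symm.reachable
          have hcompeq : comp (P (rep (comp v)) v) = comp v :=
            ConnectedComponent.sound hadj'.reachable
          rw [hdv _ hYr hYreach, hcompeq, hd']
      -- lifting iterated ancestry from G'-level to top level
      have hlift : ∀ (x : V), G.Adj r x → ∀ (k : ℕ) (w u' : V), rep (comp w) = x →
          G'.Reachable x w → G.Reachable r w → (P x)^[k] w = u' → ∃ k', p^[k'] w = u' := by
        intro x hxadj k
        induction k with
        | zero => intro w u' _ _ _ h; exact ⟨0, h⟩
        | succ k ihk =>
          intro w u' hrepw hxw hrw hit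
          by_cases hwu : w = u'
          · exact ⟨0, hwu⟩
          by_cases hwx : w = x
          · exfalso
            apply hwu
            rw [hwx, ← hit, hwx, Function.iterate_fixed (hPr x)]
          · have hwr : w ≠ r := hG'ner hxadj.ne' hxw
            obtain ⟨hadj', hd'⟩ := hPstep x w hwx hxw
            have hpw : p w = P x w := by
              rw [hpv w hwr hrw, hrepw, if_neg hwx]
            have hnr : G'.Reachable x (P x w) := hxw.trans hadj'.reachable.symm
            have hnrep : rep (comp (P x w)) = x := by
              have : comp (P x w) = comp w := ConnectedComponent.sound hadj'.reachable
              rw [this, hrepw]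
            have hnG : G.Reachable r (P x w) := hrw.trans hadj'.1.symm.reachable
            obtain ⟨k', hk'⟩ := ihk (P x w) u' hnrep hnr hnG
              (by rw [← Function.iterate_succ_apply]; exact hit)
            exact ⟨k' + 1, by rw [Function.iterate_succ_apply, hpw]; exact hk'⟩
      -- normality
      have norm : ∀ u v, G.Adj u v → G.Reachable r u → u ≠ r → v ≠ r →
          (∃ k, p^[k] v = u) ∨ (∃ k, p^[k] u = v) := by
        intro u v huv hru hur hvr
        have hrv : G.Reachable r v := hru.trans huv.reachable
        obtain ⟨hradj, hxu⟩ := hrep u hur hru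
        have hG'uv : G'.Adj u v := ⟨huv, hur, hvr⟩
        have hcompv : comp v = comp u := (ConnectedComponent.sound hG'uv.reachable).symm
        have hrepv : rep (comp v) = rep (comp u) := by rw [hcompv]
        have hxv : G'.Reachable (rep (comp u)) v := hxu.trans hG'uv.reachable
        by_cases hux : u = rep (comp u)
        · left
          obtain ⟨k, hk⟩ := alt_root_anc G' (rep (comp u)) (P (rep (comp u)))
            (D (rep (comp u))) (hPstep (rep (comp u))) v hxv
          exact hlift (rep (comp u)) hradj k v u (by rw [hrepv])
            hxv hrv (by rw [hk, ← hux])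
        by_cases hvx : v = rep (comp u)
        · right
          obtain ⟨k, hk⟩ := alt_root_anc G' (rep (comp u)) (P (rep (comp u)))
            (D (rep (comp u))) (hPstep (rep (comp u))) u hxu
          exact hlift (rep (comp u)) hradj k u v rfl hxu hru (by rw [hk, ← hvx])
        · rcases hPnorm (rep (comp u)) u v hG'uv hxu hux hvx with ⟨k, hk⟩ | ⟨k, hk⟩
          · exact Or.inl (hlift (rep (comp u)) hradj k v u (by rw [hrepv]) hxv hrv hk)
          · exact Or.inr (hlift (rep (comp u)) hradj k u v rfl hxu hru hk)
      exact ⟨p, d, hpr, hdr, step, norm⟩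
    · push_neg at hr
      exact alt_trivial_forest G r hr

end AltSignAux

/-- Every finite connected simple graph `G` has a spanning tree `T` and an alternating
sign on `T`: a labelling `φ` of the edges of `T` by `Bool` (`+`/`-`) such that for every
cotree edge (an edge of `G` not in `T`) with endpoints `u, v`, the unique path
`v₀, v₁, …, v_ℓ` in `T` joining `u` and `v` satisfies
`φ(v_i v_{i+1}) ≠ φ(v_{i+1} v_{i+2})` for all `i = 0, …, ℓ - 2`. -/
theorem exists_spanning_tree_with_alternating_sign
    {V : Type*} [Fintype V] (G : SimpleGraph V) (hG : G.Connected) :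
    ∃ T : SimpleGraph V, T ≤ G ∧ T.IsTree ∧
      ∃ φ : Sym2 V → Bool,
        ∀ ⦃u v : V⦄, G.Adj u v → ¬ T.Adj u v →
          ∀ p : T.Walk u v, p.IsPath →
            ∀ i : ℕ, i + 2 ≤ p.length →
              φ s(p.getVert i, p.getVert (i + 1)) ≠
                φ s(p.getVert (i + 1), p.getVert (i + 2)) := by
  classical
  obtain ⟨r⟩ : Nonempty V := hG.nonempty
  obtain ⟨p, d, hpr, hdr, hstep0, hnorm0⟩ :=
    alt_normal_forest (G.edgeSet.ncard) G le_rfl r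
  have hreach : ∀ v, G.Reachable r v := hG.preconnected r
  have hstep : ∀ v, v ≠ r → G.Adj (p v) v ∧ d (p v) + 1 = d v :=
    fun v hv => hstep0 v hv (hreach v)
  set T : SimpleGraph V := SimpleGraph.fromRel (fun a b => b ≠ r ∧ p b = a) with hTdef
  have hTadj : ∀ {a b : V},
      T.Adj a b ↔ a ≠ b ∧ ((b ≠ r ∧ p b = a) ∨ (a ≠ r ∧ p a = b)) := by
    intro a b; rw [hTdef]; exact SimpleGraph.fromRel_adj _ a b
  have hTle : T ≤ G := by
    intro a b hab
    rcases hTadj.mp hab with ⟨hne, ⟨h1, h2⟩ | ⟨h1, h2⟩⟩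
    · exact h2 ▸ (hstep b h1).1
    · exact (h2 ▸ (hstep a h1).1).symm
  have hTparent : ∀ v, v ≠ r → T.Adj (p v) v := by
    intro v hv
    refine hTadj.mpr ⟨?_, Or.inl ⟨hv, rfl⟩⟩
    intro h
    have := (hstep v hv).2
    rw [h] at this
    omega
  -- connectivity of T
  have hToR : ∀ v, T.Reachable v r := by
    have key : ∀ (N : ℕ) (v : V), d v ≤ N → T.Reachable v r := by
      intro N
      induction N using Nat.strong_induction_on with
      | _ N ih =>
        intro v hdv
        by_cases hvr : v = r
        · subst hvr; exact Reachable.refl v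
        · have h := hstep v hvr
          exact ((hTparent v hvr).symm.reachable).trans (ih (d (p v)) (by omega) (p v) le_rfl)
    exact fun v => key (d v) v le_rfl
  have hTconn : T.Connected := by
    rw [SimpleGraph.connected_iff]
    exact ⟨fun a b => (hToR a).trans (hToR b).symm, ⟨r⟩⟩
  -- edges of T against the depth order
  have hmaxadj : ∀ a b, T.Adj a b → d b ≤ d a → a ≠ r ∧ p a = b := by
    intro a b hab hba
    rcases hTadj.mp hab with ⟨hne, ⟨h1, h2⟩ | h⟩
    · exfalso
      have := (hstep b h1).2
      rw [h2] at this
      omega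
    · exact h
  -- acyclicity
  have hacyc : T.IsAcyclic := by
    intro v c hc
    have hvmem : v ∈ c.support.toFinset := List.mem_toFinset.mpr c.start_mem_support
    obtain ⟨x, hxmem, hxmax⟩ :=
      Finset.exists_max_image c.support.toFinset d ⟨v, hvmem⟩
    rw [List.mem_toFinset] at hxmem
    have hmax : ∀ y ∈ c.support, d y ≤ d x := fun y hy => hxmax y (List.mem_toFinset.mpr hy)
    obtain ⟨c', hc', hsub⟩ :
        ∃ c' : T.Walk x x, c'.IsCycle ∧ ∀ y ∈ c'.support, d y ≤ d x := by
      refine ⟨c.rotate x hxmem, hc.rotate hxmem, ?_⟩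
      intro y hy
      rw [Walk.support_eq_cons] at hy
      rcases List.mem_cons.mp hy with h | h
      · exact h ▸ le_rfl
      · have hperm := Walk.support_rotate c x hxmem
        have : y ∈ c.support.tail := hperm.mem_iff.mp h
        exact hmax y (by rw [Walk.support_eq_cons c]; exact List.mem_cons_of_mem _ this)
    clear hc hmax hxmax hxmem hvmem c
    cases c' with
    | nil => exact hc'.not_of_nil
    | @cons _ y _ h q =>
      have hy : p x = y := by
        have hyy : y ∈ (Walk.cons h q).support := by
          rw [Walk.support_cons]
          exact List.mem_cons_of_mem _ q.start_mem_support
        exact (hmaxadj x y h (hsub y hyy)).2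
      obtain ⟨w, hw, q', hq'⟩ := Walk.exists_eq_cons_of_ne h.ne q.reverse
      have hedge : s(x, w) ∈ q.edges := by
        have h1 : s(x, w) ∈ q.reverse.edges := by
          rw [hq', Walk.edges_cons]
          exact List.mem_cons_self
        rwa [Walk.edges_reverse, List.mem_reverse] at h1
      have hwsup : w ∈ q.support := Walk.snd_mem_support_of_mem_edges q hedge
      have hwx : p x = w := by
        refine (hmaxadj x w hw ?_).2
        refine hsub w ?_
        rw [Walk.support_cons]
        exact List.mem_cons_of_mem _ hwsup
      have hcyc := (Walk.cons_isCycle_iff q h).mp hc'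
      apply hcyc.2
      have hyw : y = w := by rw [← hy, hwx]
      rw [← hyw] at hedge
      exact hedge
  have hTree : T.IsTree := ⟨hTconn, hacyc⟩
  have hET := (SimpleGraph.isTree_iff_existsUnique_path.mp hTree).2
  -- canonical ancestor-chain paths
  have chain : ∀ (N : ℕ) (u v : V), d v ≤ N → (∃ k, p^[k] v = u) →
      ∃ w : T.Walk v u, w.IsPath ∧ ∀ i, i ≤ w.length → d (w.getVert i) + i = d v := by
    intro N
    induction N using Nat.strong_induction_on with
    | _ N ihN =>
      rintro u v hdv ⟨k, hk⟩
      by_cases hvu : v = u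
      · subst hvu
        refine ⟨Walk.nil, Walk.IsPath.nil, ?_⟩
        intro i hi
        have : i = 0 := by simpa using hi
        subst this
        simp [Walk.getVert_zero]
      · have hvr : v ≠ r := by
          rintro rfl
          exact hvu (by rw [← hk, Function.iterate_fixed hpr])
        obtain ⟨hadj, hd⟩ := hstep v hvr
        have hk' : ∃ k', p^[k'] (p v) = u := by
          cases k with
          | zero => exact absurd hk hvu
          | succ k => exact ⟨k, by rw [← Function.iterate_succ_apply]; exact hk⟩
        obtain ⟨w', hw'path, hw'⟩ := ihN (d (p v)) (by omega) u (p v) le_rfl hk'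
        refine ⟨Walk.cons (hTparent v hvr).symm w', ?_, ?_⟩
        · rw [Walk.cons_isPath_iff]
          refine ⟨hw'path, ?_⟩
          intro hmem
          obtain ⟨i, hi, hile⟩ := Walk.mem_support_iff_exists_getVert.mp hmem
          have := hw' i hile
          rw [hi] at this
          omega
        · intro i hi
          cases i with
          | zero => simp [Walk.getVert_zero]
          | succ i =>
            rw [Walk.getVert_cons_succ]
            rw [Walk.length_cons] at hi
            have := hw' i (by omega)
            omega
  -- the labelling
  refine ⟨T, hTle, hTree,
    fun e => Sym2.lift ⟨fun a b => decide ((min (d a) (d b)) % 2 = 0),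
      fun a b => congrArg (fun m => decide (m % 2 = 0)) (Nat.min_comm (d a) (d b))⟩ e, ?_⟩
  intro u v huv hTuv q hq i hi
  have hanc : (∃ k, p^[k] v = u) ∨ (∃ k, p^[k] u = v) := by
    by_cases hur : u = r
    · left
      obtain ⟨k, hk⟩ := alt_root_anc G r p d hstep0 v (hreach v)
      exact ⟨k, hk.trans hur.symm⟩
    by_cases hvr : v = r
    · right
      obtain ⟨k, hk⟩ := alt_root_anc G r p d hstep0 u (hreach u)
      exact ⟨k, hk.trans hvr.symm⟩
    · exact hnorm0 u v huv (hreach u) hur hvr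
  have key : (∀ j, j ≤ q.length → d (q.getVert j) = d u + j) ∨
      (∀ j, j ≤ q.length → d (q.getVert j) + j = d u) := by
    rcases hanc with ⟨k, hk⟩ | ⟨k, hk⟩
    · left
      obtain ⟨w, hwpath, hwd⟩ := chain (d v) u v le_rfl ⟨k, hk⟩
      have hq_eq : q = w.reverse := (hET u v).unique hq hwpath.reverse
      have hlen : q.length = w.length := by rw [hq_eq, Walk.length_reverse]
      have hdu : d u + w.length = d v := by
        have := hwd w.length le_rfl
        rw [Walk.getVert_length] at this
        omega
      intro j hj
      rw [hq_eq, Walk.getVert_reverse]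
      have h2 := hwd (w.length - j) (by omega)
      omega
    · right
      obtain ⟨w, hwpath, hwd⟩ := chain (d u) v u le_rfl ⟨k, hk⟩
      have hq_eq : q = w := (hET u v).unique hq hwpath
      intro j hj
      rw [hq_eq] at hj ⊢
      exact hwd j hj
  simp only [Sym2.lift_mk, ne_eq, decide_eq_decide]
  rcases key with hK | hK
  · have ha := hK i (by omega)
    have hb := hK (i + 1) (by omega)
    have hc := hK (i + 2) (by omega)
    rw [ha, hb, hc]
    omega
  · have ha := hK i (by omega)
    have hb := hK (i + 1) (by omega)
    have hc := hK (i + 2) (by omega)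
    omega
end

section
/- Let G be a finite connected simple graph, v* a fixed vertex, and for each spanning tree T of G set Ψ(T) = Σ_{v ∈ V(G)} d_T(v*, v). If T_M is a spanning tree of G with Ψ(T_M) maximal among all spanning trees of G, then for every cotree edge e ∈ E(G) \ E(T_M), the sequence of distances d_{T_M}(v*, v₀), d_{T_M}(v*, v₁), …, d_{T_M}(v*, v_ℓ) along the unique path v₀, v₁, …, v_ℓ in T_M joining the endpoints of e is either strictly increasing or strictly decreasing. -/
open SimpleGraph

namespace MaxPsiAux

variable {V : Type*}

lemma walk_getVert_dist_le {T : SimpleGraph V} (hc : T.Connected) {x y : V} (p : T.Walk x y)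
    (i : ℕ) : T.dist x (p.getVert i) ≤ i := by
  induction i with
  | zero => simp [Walk.getVert_zero, SimpleGraph.dist_self]
  | succ n ih =>
    by_cases h : n < p.length
    · have h1 : T.dist (p.getVert n) (p.getVert (n+1)) = 1 :=
        dist_eq_one_iff_adj.mpr (p.adj_getVert_succ h)
      have h2 := hc.dist_triangle (u := x) (v := p.getVert n) (w := p.getVert (n+1))
      omega
    · rw [p.getVert_of_length_le (by omega : p.length ≤ n + 1),
          ← p.getVert_of_length_le (by omega : p.length ≤ n)]
      omega

lemma walk_getVert_dist_right {T : SimpleGraph V} (hc : T.Connected) {x y : V} (p : T.Walk x y)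
    {i : ℕ} (hi : i ≤ p.length) : T.dist (p.getVert i) y + i ≤ p.length := by
  have h1 : T.dist y (p.reverse.getVert (p.length - i)) ≤ p.length - i :=
    walk_getVert_dist_le hc p.reverse _
  rw [p.getVert_reverse, show p.length - (p.length - i) = i by omega,
      SimpleGraph.dist_comm] at h1
  omega

lemma mem_support_dist {T : SimpleGraph V} {x y w : V} (p : T.Walk x y) (h : w ∈ p.support) :
    T.dist x w + T.dist w y ≤ p.length := by
  classical
  have h1 := SimpleGraph.dist_le (p.takeUntil w h)
  have h2 := SimpleGraph.dist_le (p.dropUntil w h)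
  have h3 := congrArg Walk.length (p.take_spec h)
  rw [Walk.length_append] at h3
  omega

lemma tree_path_length {T : SimpleGraph V} (hT : T.IsTree) {x y : V} (p : T.Walk x y)
    (hp : p.IsPath) : p.length = T.dist x y := by
  obtain ⟨q, hq, hqlen⟩ := hT.isConnected.exists_path_of_dist x y
  rw [(hT.existsUnique_path x y).unique hp hq]
  exact hqlen

lemma adj_dist_cases {T : SimpleGraph V} (hT : T.IsTree) (r : V) {a b : V} (hab : T.Adj a b) :
    T.dist r b = T.dist r a + 1 ∨ T.dist r a = T.dist r b + 1 := by
  classical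
  have hc := hT.isConnected
  have h1 : T.dist a b = 1 := dist_eq_one_iff_adj.mpr hab
  have h4 : T.dist b a = 1 := dist_eq_one_iff_adj.mpr hab.symm
  have h2 := hc.dist_triangle (u := r) (v := a) (w := b)
  have h3 := hc.dist_triangle (u := r) (v := b) (w := a)
  rcases Nat.lt_trichotomy (T.dist r a) (T.dist r b) with h | h | h
  · left; omega
  · exfalso
    obtain ⟨q, hq, hqlen⟩ := hc.exists_path_of_dist r a
    have hbq : b ∉ q.support := by
      intro hmem
      have := mem_support_dist q hmem
      omega
    have hQ : (Walk.cons hab.symm q.reverse).IsPath := by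
      rw [Walk.cons_isPath_iff]
      exact ⟨hq.reverse, by simpa [Walk.support_reverse] using hbq⟩
    have hlen := tree_path_length hT _ hQ
    rw [Walk.length_cons, Walk.length_reverse] at hlen
    have h5 : T.dist b r = T.dist r b := SimpleGraph.dist_comm
    omega
  · right; omega

lemma parent_unique {T : SimpleGraph V} (hT : T.IsTree) (r : V) {a b c : V}
    (hb : T.Adj a b) (hc : T.Adj a c) (h1 : T.dist r b + 1 = T.dist r a)
    (h2 : T.dist r c + 1 = T.dist r a) : b = c := by
  classical
  have hcon := hT.isConnected
  obtain ⟨qb, hqb, hqbl⟩ := hcon.exists_path_of_dist b r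
  obtain ⟨qc, hqc, hqcl⟩ := hcon.exists_path_of_dist c r
  have hba : T.dist b a = 1 := dist_eq_one_iff_adj.mpr hb.symm
  have hca : T.dist c a = 1 := dist_eq_one_iff_adj.mpr hc.symm
  have ebr : T.dist b r = T.dist r b := SimpleGraph.dist_comm
  have ecr : T.dist c r = T.dist r c := SimpleGraph.dist_comm
  have ear : T.dist a r = T.dist r a := SimpleGraph.dist_comm
  have hna : a ∉ qb.support := by
    intro hmem
    have := mem_support_dist qb hmem
    omega
  have hnc : a ∉ qc.support := by
    intro hmem
    have := mem_support_dist qc hmem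
    omega
  have hWb : (Walk.cons hb qb).IsPath := (Walk.cons_isPath_iff _ _).mpr ⟨hqb, hna⟩
  have hWc : (Walk.cons hc qc).IsPath := (Walk.cons_isPath_iff _ _).mpr ⟨hqc, hnc⟩
  have heq : Walk.cons hb qb = Walk.cons hc qc := (hT.existsUnique_path a r).unique hWb hWc
  have := congrArg (fun (w : T.Walk a r) => w.getVert 1) heq
  simpa [Walk.getVert_cons_succ] using this

lemma strict_incr {T : SimpleGraph V} (hc : T.Connected) {r x y : V} (p : T.Walk x y)
    (h : T.dist r y = T.dist r x + p.length) {i : ℕ} (hi : i + 1 ≤ p.length) :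
    T.dist r (p.getVert i) < T.dist r (p.getVert (i + 1)) := by
  have A1 := hc.dist_triangle (u := r) (v := x) (w := p.getVert i)
  have A2 := walk_getVert_dist_le hc p i
  have B1 := hc.dist_triangle (u := r) (v := p.getVert (i+1)) (w := y)
  have C := walk_getVert_dist_right hc p (show i + 1 ≤ p.length from hi)
  omega

lemma strict_decr {T : SimpleGraph V} (hc : T.Connected) {r x y : V} (p : T.Walk x y)
    (h : T.dist r x = T.dist r y + p.length) {i : ℕ} (hi : i + 1 ≤ p.length) :
    T.dist r (p.getVert i) > T.dist r (p.getVert (i + 1)) := by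
  have A1 := hc.dist_triangle (u := r) (v := p.getVert i) (w := x)
  have A2 := walk_getVert_dist_le hc p i
  have A3 : T.dist (p.getVert i) x = T.dist x (p.getVert i) := SimpleGraph.dist_comm
  have B1 := hc.dist_triangle (u := r) (v := y) (w := p.getVert (i+1))
  have B2 := walk_getVert_dist_right hc p hi
  have B3 : T.dist y (p.getVert (i+1)) = T.dist (p.getVert (i+1)) y := SimpleGraph.dist_comm
  omega



lemma main_contra [Fintype V] (G : SimpleGraph V) (vstar : V)
    (TM : SimpleGraph V) (hTMG : TM ≤ G) (hTM : TM.IsTree)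
    (hmax : ∀ T : SimpleGraph V, T ≤ G → T.IsTree →
      ∑ w : V, T.dist vstar w ≤ ∑ w : V, TM.dist vstar w)
    {u v : V} (huv : G.Adj u v) (hnuv : ¬ TM.Adj u v)
    (hle : TM.dist vstar u ≤ TM.dist vstar v)
    (hne : TM.dist vstar v ≠ TM.dist vstar u + TM.dist u v) : False := by
  classical
  have hconn := hTM.isConnected
  have huvne : u ≠ v := huv.ne
  have hduv : 1 ≤ TM.dist u v := hconn.pos_dist_of_ne huvne
  have hvu : u ≠ vstar := by
    rintro rfl
    exact hne (by simp [SimpleGraph.dist_self])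
  have hdu : 1 ≤ TM.dist vstar u := hconn.pos_dist_of_ne (Ne.symm hvu)
  have hSle : ∀ w, TM.dist vstar w ≤ TM.dist vstar u + TM.dist u w :=
    fun w => hconn.dist_triangle
  -- the parent of u
  obtain ⟨q, hq, hqlen⟩ := hconn.exists_path_of_dist vstar u
  have hq1 : 1 ≤ q.length := by omega
  set pu : V := q.getVert (q.length - 1) with hpuDef
  have hpu_adj : TM.Adj pu u := by
    have h := q.adj_getVert_succ (i := q.length - 1) (by omega)
    rwa [show q.length - 1 + 1 = q.length by omega, q.getVert_length] at h
  have hdpu : TM.dist vstar pu + 1 = TM.dist vstar u := by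
    have h1 : TM.dist vstar pu ≤ q.length - 1 := walk_getVert_dist_le hconn q _
    have h2 : TM.dist vstar u ≤ TM.dist vstar pu + TM.dist pu u := hconn.dist_triangle
    have h3 : TM.dist pu u = 1 := dist_eq_one_iff_adj.mpr hpu_adj
    omega
  -- crossing lemma
  have cross : ∀ a b : V, TM.Adj a b →
      TM.dist vstar a = TM.dist vstar u + TM.dist u a →
      ¬ (TM.dist vstar b = TM.dist vstar u + TM.dist u b) →
      s(a, b) = s(pu, u) := by
    intro a b hab hSa hSb
    have hd := adj_dist_cases hTM vstar hab
    have hab1 : TM.dist a b = 1 := dist_eq_one_iff_adj.mpr hab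
    have hba1 : TM.dist b a = 1 := dist_eq_one_iff_adj.mpr hab.symm
    have htri1 : TM.dist u b ≤ TM.dist u a + TM.dist a b := hconn.dist_triangle
    have htri2 : TM.dist u a ≤ TM.dist u b + TM.dist b a := hconn.dist_triangle
    have hub : TM.dist vstar b ≤ TM.dist vstar u + TM.dist u b := hSle b
    rcases hd with h | h
    · exact absurd (by omega) hSb
    · have hblt : TM.dist vstar b < TM.dist vstar u + TM.dist u b :=
        lt_of_le_of_ne hub hSb
      have key : TM.dist u a ≤ TM.dist u b := by omega
      by_cases hau : a = u
      · subst hau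
        have hb : b = pu :=
          parent_unique hTM vstar hab hpu_adj.symm (by omega) (by omega)
        rw [hb]
        exact Sym2.eq_swap
      · exfalso
        have hua1 : 1 ≤ TM.dist u a := hconn.pos_dist_of_ne (Ne.symm hau)
        obtain ⟨q4, hq4, hq4len⟩ := hconn.exists_path_of_dist u a
        have hql : 1 ≤ q4.length := by omega
        set c : V := q4.getVert (q4.length - 1) with hcDef
        have hcadj : TM.Adj c a := by
          have h := q4.adj_getVert_succ (i := q4.length - 1) (by omega)
          rwa [show q4.length - 1 + 1 = q4.length by omega, q4.getVert_length] at h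
        have hca1 : TM.dist c a = 1 := dist_eq_one_iff_adj.mpr hcadj
        have hduc : TM.dist u c + 1 = TM.dist u a := by
          have h1 : TM.dist u c ≤ q4.length - 1 := walk_getVert_dist_le hconn q4 _
          have h2 : TM.dist u a ≤ TM.dist u c + TM.dist c a := hconn.dist_triangle
          omega
        have hdc_ub : TM.dist vstar c ≤ TM.dist vstar u + TM.dist u c := hSle c
        have hdca : TM.dist vstar c + 1 = TM.dist vstar a := by
          have h4 : TM.dist vstar a ≤ TM.dist vstar c + TM.dist c a := hconn.dist_triangle
          omega
        have hbc : b = c := parent_unique hTM vstar hab hcadj.symm (by omega) hdca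
        rw [hbc] at key
        omega
  -- the swapped graph
  let T' : SimpleGraph V :=
    { Adj := fun a b => (TM.Adj a b ∧ s(a, b) ≠ s(pu, u)) ∨ (s(a, b) = s(u, v) ∧ a ≠ b),
      symm := by
        refine ⟨fun a b h => ?_⟩
        rcases h with ⟨h1, h2⟩ | ⟨h3, h4⟩
        · exact Or.inl ⟨h1.symm, by rwa [Sym2.eq_swap]⟩
        · exact Or.inr ⟨by rwa [Sym2.eq_swap], h4.symm⟩
      loopless := by
        refine ⟨fun a h => ?_⟩
        rcases h with ⟨h1, _⟩ | ⟨_, h4⟩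
        · exact TM.irrefl h1
        · exact h4 rfl }
  have hT'adj : ∀ a b : V, T'.Adj a b ↔
      ((TM.Adj a b ∧ s(a, b) ≠ s(pu, u)) ∨ (s(a, b) = s(u, v) ∧ a ≠ b)) :=
    fun a b => Iff.rfl
  have hT'G : T' ≤ G := by
    intro a b h
    rcases (hT'adj a b).mp h with ⟨h1, _⟩ | ⟨h3, _⟩
    · exact hTMG h1
    · rcases Sym2.eq_iff.mp h3 with ⟨rfl, rfl⟩ | ⟨rfl, rfl⟩
      · exact huv
      · exact huv.symm
  have hT'uv : T'.Adj u v := (hT'adj u v).mpr (Or.inr ⟨rfl, huvne⟩)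
  -- transferring walks avoiding u
  have transfer1 : ∀ {x y : V} (w : TM.Walk x y), u ∉ w.support → T'.Reachable x y := by
    intro x y w
    induction w with
    | nil => exact fun _ => Reachable.refl _
    | @cons x' y' z' h w ih =>
      intro hu
      rw [Walk.support_cons, List.mem_cons] at hu
      push_neg at hu
      obtain ⟨hx, hw⟩ := hu
      have hadj : T'.Adj x' y' := (hT'adj _ _).mpr (Or.inl ⟨h, by
        intro hf
        rcases Sym2.eq_iff.mp hf with ⟨h1, h2⟩ | ⟨h1, h2⟩
        · exact hw (h2 ▸ w.start_mem_support)
        · exact hx h1.symm⟩)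
      exact hadj.reachable.trans (ih hw)
  obtain ⟨q2, hq2, hq2len⟩ := hconn.exists_path_of_dist vstar pu
  have hu2 : u ∉ q2.support := by
    intro hmem
    have := mem_support_dist q2 hmem
    omega
  have r1 : T'.Reachable vstar pu := transfer1 q2 hu2
  obtain ⟨q3, hq3, hq3len⟩ := hconn.exists_path_of_dist vstar v
  have hu3 : u ∉ q3.support := by
    intro hmem
    have h5 := mem_support_dist q3 hmem
    have h6 := hSle v
    exact hne (by omega)
  have r2 : T'.Reachable vstar v := transfer1 q3 hu3
  have r3 : T'.Reachable vstar u := r2.trans hT'uv.symm.reachable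
  have rpu : T'.Reachable pu u := r1.symm.trans r3
  have transfer2 : ∀ {x y : V} (w : TM.Walk x y), T'.Reachable x y := by
    intro x y w
    induction w with
    | nil => exact Reachable.refl _
    | @cons x' y' z' h w ih =>
      by_cases hf : s(x', y') = s(pu, u)
      · rcases Sym2.eq_iff.mp hf with ⟨rfl, rfl⟩ | ⟨rfl, rfl⟩
        · exact rpu.trans ih
        · exact rpu.symm.trans ih
      · exact ((hT'adj _ _).mpr (Or.inl ⟨h, hf⟩)).reachable.trans ih
  have hT'conn : T'.Connected := (connected_iff_exists_forall_reachable _).mpr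
    ⟨vstar, fun w => by obtain ⟨wk⟩ := hconn.preconnected vstar w; exact transfer2 wk⟩
  -- cut lemma in TM minus the parent edge
  have hcut : ∀ {x y : V} (w : (TM \ fromEdgeSet {s(pu, u)}).Walk x y),
      TM.dist vstar x = TM.dist vstar u + TM.dist u x →
      TM.dist vstar y = TM.dist vstar u + TM.dist u y := by
    intro x y w
    induction w with
    | nil => exact id
    | @cons x' y' z' h w ih =>
      intro hx
      rw [sdiff_adj] at h
      have h2 : s(x', y') ≠ s(pu, u) := by
        intro he
        exact h.2 ((fromEdgeSet_adj _).mpr ⟨by simp [he], h.1.ne⟩)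
      apply ih
      by_contra hy
      exact h2 (cross x' y' h.1 hx hy)
  have hT'ac : T'.IsAcyclic := by
    intro x c hc
    by_cases he : s(u, v) ∈ c.edges
    · have hreach : (T' \ fromEdgeSet {s(u, v)}).Reachable u v :=
        ((adj_and_reachable_delete_edges_iff_exists_cycle (G := T')).mpr ⟨x, c, hc, he⟩).2
      have hmono : (T' \ fromEdgeSet {s(u, v)}) ≤ (TM \ fromEdgeSet {s(pu, u)}) := by
        intro a b hab
        rw [sdiff_adj] at hab ⊢
        obtain ⟨h1, h2⟩ := hab
        rcases (hT'adj a b).mp h1 with ⟨h3, h4⟩ | ⟨h5, h6⟩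
        · refine ⟨h3, fun hf => h4 ?_⟩
          simpa using ((fromEdgeSet_adj _).mp hf).1
        · exact absurd ((fromEdgeSet_adj _).mpr ⟨by simp [h5], h6⟩) h2
      obtain ⟨w⟩ := hreach.mono hmono
      have hSv' := hcut w (by simp [SimpleGraph.dist_self])
      exact hne hSv'
    · have hsub : ∀ e ∈ c.edges, e ∈ TM.edgeSet := by
        intro e
        induction e using Sym2.ind with
        | _ a b =>
          intro hee
          have h1 : T'.Adj a b := (T'.mem_edgeSet).mp (c.edges_subset_edgeSet hee)
          rw [TM.mem_edgeSet]
          rcases (hT'adj a b).mp h1 with ⟨h3, _⟩ | ⟨h5, _⟩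
          · exact h3
          · exact absurd (h5 ▸ hee) he
      exact hTM.IsAcyclic (c.transfer TM hsub) (hc.transfer hsub)
  have hT'tree : T'.IsTree := ⟨hT'conn, hT'ac⟩
  -- the potential function
  set φ : V → ℕ := fun w =>
    if TM.dist vstar w = TM.dist vstar u + TM.dist u w then
      TM.dist vstar w + (TM.dist vstar v + 1 - TM.dist vstar u)
    else TM.dist vstar w with hφdef
  have hφ : ∀ w, φ w =
      if TM.dist vstar w = TM.dist vstar u + TM.dist u w then
        TM.dist vstar w + (TM.dist vstar v + 1 - TM.dist vstar u)
      else TM.dist vstar w := fun w => rfl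
  have hSu : TM.dist vstar u = TM.dist vstar u + TM.dist u u := by
    simp [SimpleGraph.dist_self]
  have hφu : φ u = TM.dist vstar v + 1 := by
    rw [hφ u, if_pos hSu]; omega
  have hφvst : φ vstar = 0 := by
    have hns : ¬ (TM.dist vstar vstar = TM.dist vstar u + TM.dist u vstar) := by
      rw [SimpleGraph.dist_self]; omega
    rw [hφ vstar, if_neg hns, SimpleGraph.dist_self]
  have hlip : ∀ a b : V, T'.Adj a b → φ b ≤ φ a + 1 := by
    intro a b hab
    rcases (hT'adj a b).mp hab with ⟨h1, h2⟩ | ⟨h3, _⟩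
    · have hd := adj_dist_cases hTM vstar h1
      by_cases hSa : TM.dist vstar a = TM.dist vstar u + TM.dist u a <;>
        by_cases hSb : TM.dist vstar b = TM.dist vstar u + TM.dist u b
      · rw [hφ a, hφ b, if_pos hSa, if_pos hSb]; omega
      · exact absurd (cross a b h1 hSa hSb) h2
      · exfalso
        have hx := cross b a h1.symm hSb hSa
        rw [Sym2.eq_swap] at hx
        exact h2 hx
      · rw [hφ a, hφ b, if_neg hSa, if_neg hSb]; omega
    · rcases Sym2.eq_iff.mp h3 with ⟨ha, hb⟩ | ⟨ha, hb⟩ <;> rw [ha, hb] <;>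
        rw [hφu, hφ v, if_neg hne] <;> omega
  have hwalk : ∀ {x y : V} (w : T'.Walk x y), φ y ≤ φ x + w.length := by
    intro x y w
    induction w with
    | nil => simp
    | @cons x' y' z' h w ih =>
      have := hlip x' y' h
      rw [Walk.length_cons]
      omega
  have hdist : ∀ w : V, φ w ≤ T'.dist vstar w := by
    intro w
    obtain ⟨pw, hpw, hplen⟩ := hT'conn.exists_path_of_dist vstar w
    have := hwalk pw
    omega
  have hlt : ∑ w : V, TM.dist vstar w < ∑ w : V, φ w := by
    apply Finset.sum_lt_sum
    · intro i _
      rw [hφ i]; split <;> omega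
    · exact ⟨u, Finset.mem_univ u, by rw [hφu]; omega⟩
  have hle2 : ∑ w : V, φ w ≤ ∑ w : V, T'.dist vstar w :=
    Finset.sum_le_sum fun i _ => hdist i
  have hfin := hmax T' hT'G hT'tree
  omega


end MaxPsiAux

/-- Let `G` be a finite connected simple graph with a fixed vertex `v*`, and for a spanning
tree `T` let `Ψ(T) = Σ_{v ∈ V(G)} d_T(v*, v)`. If `T_M` is a spanning tree maximizing `Ψ`,
then for every cotree edge with endpoints `u, v`, the distances from `v*` along the unique
path in `T_M` joining `u` and `v` are either strictly increasing or strictly decreasing. -/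
theorem maximal_distance_sum_spanning_tree_monotone_fundamental_paths
    {V : Type*} [Fintype V] (G : SimpleGraph V) (hG : G.Connected) (vstar : V)
    (TM : SimpleGraph V) (hTMG : TM ≤ G) (hTM : TM.IsTree)
    (hmax : ∀ T : SimpleGraph V, T ≤ G → T.IsTree →
      ∑ v : V, T.dist vstar v ≤ ∑ v : V, TM.dist vstar v) :
    ∀ ⦃u v : V⦄, G.Adj u v → ¬ TM.Adj u v →
      ∀ p : TM.Walk u v, p.IsPath →
        ((∀ i : ℕ, i + 1 ≤ p.length →
            TM.dist vstar (p.getVert i) < TM.dist vstar (p.getVert (i + 1))) ∨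
         (∀ i : ℕ, i + 1 ≤ p.length →
            TM.dist vstar (p.getVert i) > TM.dist vstar (p.getVert (i + 1)))) := by
  classical
  intro u v huv hnuv p hp
  have hconn := hTM.isConnected
  have hlen : p.length = TM.dist u v := MaxPsiAux.tree_path_length hTM p hp
  by_cases hinc : TM.dist vstar v = TM.dist vstar u + p.length
  · exact Or.inl fun i hi => MaxPsiAux.strict_incr hconn p hinc hi
  by_cases hdec : TM.dist vstar u = TM.dist vstar v + p.length
  · exact Or.inr fun i hi => MaxPsiAux.strict_decr hconn p hdec hi
  exfalso
  rcases le_total (TM.dist vstar u) (TM.dist vstar v) with hle | hle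
  · exact MaxPsiAux.main_contra G vstar TM hTMG hTM hmax huv hnuv hle
      (by rw [← hlen]; exact hinc)
  · refine MaxPsiAux.main_contra G vstar TM hTMG hTM hmax huv.symm
      (fun h => hnuv h.symm) hle ?_
    have hvu : TM.dist v u = p.length := by rw [SimpleGraph.dist_comm]; exact hlen.symm
    rw [hvu]
    exact hdec
end

section
/- Let G be a finite connected simple graph with a fixed vertex v*, let T be a spanning tree of G, and let e = uv be a cotree edge with fundamental path v₀ = u, v₁, …, v_ℓ = v in T such that d_T(v*, v₀) ≤ d_T(v*, v_ℓ) and there is an index 1 ≤ i ≤ ℓ − 1 with d_T(v*, v_{i−1}) > d_T(v*, v_i) and d_T(v*, v_i) < d_T(v*, v_{i+1}). Let T′ be the spanning tree with edge set (E(T) ∪ {e}) \ {v_{i−1} v_i}. Then Σ_{w ∈ V(G)} d_T(v*, w) < Σ_{w ∈ V(G)} d_{T′}(v*, w). -/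
open SimpleGraph Walk

section Helpers

variable {V : Type*} {T : SimpleGraph V}

lemma tree_path_length_eq_dist (hT : T.IsTree) {a b : V} (P : T.Walk a b) (hP : P.IsPath) :
    P.length = T.dist a b := by
  obtain ⟨q, hq, hql⟩ := hT.isConnected.exists_path_of_dist a b
  have h := hT.IsAcyclic.path_unique ⟨P, hP⟩ ⟨q, hq⟩
  have h2 : P = q := congrArg Subtype.val h
  rw [h2, hql]

lemma isPath_concat' {a b c : V} {P : T.Walk a b} (hP : P.IsPath) (h : T.Adj b c)
    (hc : c ∉ P.support) : (P.concat h).IsPath := by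
  apply IsPath.mk'
  rw [Walk.support_concat]
  refine List.Nodup.append hP.support_nodup (List.nodup_singleton c) ?_
  intro z hz hz'
  rw [List.mem_singleton] at hz'
  exact hc (hz' ▸ hz)

lemma tree_parent_unique (hT : T.IsTree) {r a b c : V}
    (hab : T.Adj a b) (hcb : T.Adj c b)
    (ha : T.dist r a + 1 = T.dist r b) (hc : T.dist r c + 1 = T.dist r b) : a = c := by
  classical
  obtain ⟨pa, hpa, hpal⟩ := hT.isConnected.exists_path_of_dist r a
  obtain ⟨pc, hpc, hpcl⟩ := hT.isConnected.exists_path_of_dist r c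
  have hbpa : b ∉ pa.support := by
    intro hb
    have h1 := SimpleGraph.dist_le (pa.takeUntil b hb)
    have h2 := Walk.length_takeUntil_le pa hb
    omega
  have hbpc : b ∉ pc.support := by
    intro hb
    have h1 := SimpleGraph.dist_le (pc.takeUntil b hb)
    have h2 := Walk.length_takeUntil_le pc hb
    omega
  have h := hT.IsAcyclic.path_unique ⟨pa.concat hab, isPath_concat' hpa hab hbpa⟩
    ⟨pc.concat hcb, isPath_concat' hpc hcb hbpc⟩
  have h2 : pa.concat hab = pc.concat hcb := congrArg Subtype.val h
  obtain ⟨hv, -⟩ := Walk.concat_inj h2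
  exact hv

lemma path_getVert_inj {a b : V} (P : T.Walk a b) (hP : P.IsPath) {j k : ℕ}
    (hj : j ≤ P.length) (hk : k ≤ P.length) (heq : P.getVert j = P.getVert k) : j = k := by
  clear * - hP hj hk heq
  induction P generalizing j k with
  | nil => simp at hj hk; omega
  | cons h q ih =>
    rw [Walk.cons_isPath_iff] at hP
    obtain ⟨hq, hu⟩ := hP
    match j, k with
    | 0, 0 => rfl
    | 0, k + 1 =>
      exfalso
      rw [Walk.getVert_zero, Walk.getVert_cons_succ] at heq
      exact hu (Walk.mem_support_iff_exists_getVert.mpr ⟨k, heq.symm, by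
        simpa using hk⟩)
    | j + 1, 0 =>
      exfalso
      rw [Walk.getVert_zero, Walk.getVert_cons_succ] at heq
      exact hu (Walk.mem_support_iff_exists_getVert.mpr ⟨j, heq, by
        simpa using hj⟩)
    | j + 1, k + 1 =>
      rw [Walk.getVert_cons_succ, Walk.getVert_cons_succ] at heq
      have := ih hq (by simpa using hj) (by simpa using hk) heq
      omega

lemma tree_walk_edges_contain (hT : T.IsTree) {a b : V} {q : T.Walk a b} (hq : q.IsPath)
    {e : Sym2 V} (he : e ∈ q.edges) (W : T.Walk a b) : e ∈ W.edges := by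
  classical
  have h := hT.IsAcyclic.path_unique ⟨W.bypass, W.bypass_isPath⟩ ⟨q, hq⟩
  have h2 : W.bypass = q := congrArg Subtype.val h
  exact W.edges_bypass_subset (h2 ▸ he)

end Helpers


/-- Let `G` be a finite connected simple graph with a fixed vertex `v*`, `T` a spanning
tree of `G`, and `e = uv` a cotree edge with fundamental path `v₀ = u, …, v_ℓ = v` in `T`
such that `d_T(v*, v₀) ≤ d_T(v*, v_ℓ)` and there is an index `1 ≤ i ≤ ℓ - 1` with
`d_T(v*, v_{i-1}) > d_T(v*, v_i)` and `d_T(v*, v_i) < d_T(v*, v_{i+1})`. Let `T'` be the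
spanning tree with edge set `(E(T) ∪ {e}) \ {v_{i-1} v_i}`. Then
`Σ_{w ∈ V(G)} d_T(v*, w) < Σ_{w ∈ V(G)} d_{T'}(v*, w)`. -/
theorem edge_exchange_distance_sum_increases
    {V : Type*} [Fintype V] (G : SimpleGraph V) (hG : G.Connected) (vstar : V)
    (T : SimpleGraph V) (hTG : T ≤ G) (hT : T.IsTree)
    {u v : V} (he : G.Adj u v) (heT : ¬ T.Adj u v)
    (p : T.Walk u v) (hp : p.IsPath)
    (hends : T.dist vstar u ≤ T.dist vstar v)
    (i : ℕ) (hi1 : 1 ≤ i) (hi2 : i + 1 ≤ p.length)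
    (hdown : T.dist vstar (p.getVert (i - 1)) > T.dist vstar (p.getVert i))
    (hup : T.dist vstar (p.getVert i) < T.dist vstar (p.getVert (i + 1)))
    (T' : SimpleGraph V)
    (hT' : T' = SimpleGraph.fromEdgeSet
        ((T.edgeSet ∪ {s(u, v)}) \ {s(p.getVert (i - 1), p.getVert i)})) :
    ∑ w : V, T.dist vstar w < ∑ w : V, T'.dist vstar w := by
  classical
  set x := p.getVert (i - 1) with hx
  set y := p.getVert i with hy
  set m := T.dist vstar y with hm
  have hconn := hT.isConnected
  have hadj_xy : T.Adj x y := by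
    have h := p.adj_getVert_succ (show i - 1 < p.length by omega)
    rwa [show i - 1 + 1 = i by omega] at h
  have hinj : ∀ {j k : ℕ}, j ≤ p.length → k ≤ p.length → p.getVert j = p.getVert k → j = k :=
    fun {j k} => path_getVert_inj p hp
  -- edges of p other than at position i-1 are distinct from s(x,y)
  have hedge_ne : ∀ j, j < p.length → j ≠ i - 1 →
      s(p.getVert j, p.getVert (j + 1)) ≠ s(x, y) := by
    intro j hj hne heq
    rw [Sym2.eq_iff] at heq
    rcases heq with ⟨h1, h2⟩ | ⟨h1, h2⟩
    · exact hne (hinj (by omega) (by omega) (h1.trans hx))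
    · have e1 := hinj (by omega) (by omega) (h1.trans hy)
      have e2 := hinj (by omega) (by omega) (h2.trans hx)
      omega
  have huv_ne_f : s(u, v) ≠ s(x, y) := by
    intro hcontr
    exact heT (by rw [← SimpleGraph.mem_edgeSet, hcontr]; exact hadj_xy)
  have hT'_adj_uv : T'.Adj u v := by
    rw [hT', SimpleGraph.fromEdgeSet_adj]
    exact ⟨⟨Or.inr rfl, huv_ne_f⟩, he.ne⟩
  have hT'_adj_of_T : ∀ {a b : V}, T.Adj a b → s(a, b) ≠ s(x, y) → T'.Adj a b := by
    intro a b hab hne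
    rw [hT', SimpleGraph.fromEdgeSet_adj]
    exact ⟨⟨Or.inl hab, hne⟩, hab.ne⟩
  have hT'_edgeSet : T'.edgeSet =
      ((T.edgeSet ∪ {s(u, v)}) \ {s(x, y)}) \ {e | e.IsDiag} := by
    rw [hT', SimpleGraph.edgeSet_fromEdgeSet, Sym2.diagSet_eq_setOfPred_isDiag]
  have hf_not_T' : s(x, y) ∉ T'.edgeSet := by
    rw [hT'_edgeSet]; intro h; exact h.1.2 rfl
  have hf_not_in : ∀ {c d : V} (W : T'.Walk c d), s(x, y) ∉ W.edges :=
    fun W hW => hf_not_T' (W.edges_subset_edgeSet hW)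
  have hsub_T : ∀ {c d : V} (W : T'.Walk c d), s(u, v) ∉ W.edges →
      ∀ e ∈ W.edges, e ∈ T.edgeSet := by
    intro c d W huvW e heW
    have h1 : e ∈ T'.edgeSet := W.edges_subset_edgeSet heW
    rw [hT'_edgeSet] at h1
    rcases h1.1.1 with h | h
    · exact h
    · rw [Set.mem_singleton_iff] at h
      exact absurd (h ▸ heW) huvW
  -- distance of x
  have hdx : T.dist vstar x = m + 1 := by
    have h1 : T.dist vstar x ≤ m + 1 := by
      have ht := hconn.dist_triangle (u := vstar) (v := y) (w := x)
      have h2 : T.dist y x = 1 := SimpleGraph.dist_eq_one_iff_adj.mpr hadj_xy.symm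
      omega
    omega
  -- descending induction: unique path from vstar to u goes through s(x,y)
  have main_ind : ∀ t, t ≤ i - 1 →
      T.dist vstar (p.getVert (i - t)) = m + t ∧
      ∃ q : T.Walk vstar (p.getVert (i - 1 - t)),
        q.IsPath ∧ s(x, y) ∈ q.edges ∧ q.length = m + 1 + t := by
    intro t
    induction t with
    | zero =>
      intro _
      constructor
      · rw [Nat.sub_zero, ← hy, ← hm]; omega
      · obtain ⟨sp, hsp, hspl⟩ := hconn.exists_path_of_dist vstar y
        have hxsp : x ∉ sp.support := by
          intro hmem
          have h1 := SimpleGraph.dist_le (sp.takeUntil x hmem)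
          have h2 := Walk.length_takeUntil_le sp hmem
          omega
        have hadj_yx : T.Adj y x := hadj_xy.symm
        refine ⟨(sp.concat hadj_yx).copy rfl (by rw [Nat.sub_zero, ← hx]), ?_, ?_, ?_⟩
        · rw [Walk.isPath_copy]
          exact isPath_concat' hsp hadj_yx hxsp
        · rw [Walk.edges_copy, Walk.edges_concat, List.concat_eq_append]
          simp [Sym2.eq_swap]
        · rw [Walk.length_copy, Walk.length_concat]
          omega
    | succ t ih =>
      intro ht1
      have ih' := ih (by omega)
      obtain ⟨j, hj⟩ : ∃ j, i - 1 - t = j := ⟨_, rfl⟩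
      rw [hj] at ih'
      obtain ⟨hdist_t, q, hq, hfq, hql⟩ := ih'
      have hj1 : 1 ≤ j := by omega
      have hdq : T.dist vstar (p.getVert j) = m + 1 + t := by
        rw [← tree_path_length_eq_dist hT q hq, hql]
      have hdj1 : T.dist vstar (p.getVert (j + 1)) = m + t := by
        rw [show j + 1 = i - t by omega]
        exact hdist_t
      have hadj_j : T.Adj (p.getVert (j - 1)) (p.getVert j) := by
        have h := p.adj_getVert_succ (show j - 1 < p.length by omega)
        rwa [show j - 1 + 1 = j by omega] at h
      have hadj_j1 : T.Adj (p.getVert (j + 1)) (p.getVert j) :=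
        (p.adj_getVert_succ (show j < p.length by omega)).symm
      have hnot : p.getVert (j - 1) ∉ q.support := by
        intro hmem
        have htk := hq.takeUntil hmem
        have hdr := hq.dropUntil hmem
        have hlen_dr : (q.dropUntil _ hmem).length = 1 := by
          rw [tree_path_length_eq_dist hT _ hdr]
          exact SimpleGraph.dist_eq_one_iff_adj.mpr hadj_j
        have hsplit : (q.takeUntil _ hmem).length + (q.dropUntil _ hmem).length = q.length := by
          have h := congrArg Walk.length (q.take_spec hmem)
          rwa [Walk.length_append] at h
        have hdtk : T.dist vstar (p.getVert (j - 1)) = m + t := by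
          rw [← tree_path_length_eq_dist hT _ htk]
          omega
        have heq := tree_parent_unique (r := vstar) hT hadj_j hadj_j1 (by omega) (by omega)
        have hje := hinj (by omega) (by omega) heq
        omega
      constructor
      · rw [show i - (t + 1) = j by omega, hdq]; omega
      · rw [show i - 1 - (t + 1) = j - 1 by omega]
        refine ⟨q.concat hadj_j.symm, isPath_concat' hq hadj_j.symm hnot, ?_, ?_⟩
        · rw [Walk.edges_concat, List.concat_eq_append]
          exact List.mem_append_left _ hfq
        · rw [Walk.length_concat]; omega
  have hmain := main_ind (i - 1) le_rfl
  obtain ⟨-, q0, hq0, hfq0, -⟩ := hmain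
  have h0u : p.getVert (i - 1 - (i - 1)) = u := by rw [Nat.sub_self, Walk.getVert_zero]
  have bridge : ∀ W : T.Walk vstar u, s(x, y) ∈ W.edges := by
    intro W
    have h := tree_walk_edges_contain hT hq0 hfq0 (W.copy rfl h0u.symm)
    rwa [Walk.edges_copy] at h
  -- reachability in T'
  have reach1 : ∀ t, t ≤ i - 1 → T'.Reachable (p.getVert t) u := by
    intro t
    induction t with
    | zero =>
      intro _
      rw [p.getVert_zero]
    | succ t ih =>
      intro ht
      have hadj : T.Adj (p.getVert t) (p.getVert (t + 1)) := p.adj_getVert_succ (by omega)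
      have hne := hedge_ne t (by omega) (by omega)
      exact ((hT'_adj_of_T hadj hne).symm.reachable).trans (ih (by omega))
  have reach2 : ∀ t, t ≤ p.length - i → T'.Reachable (p.getVert (p.length - t)) v := by
    intro t
    induction t with
    | zero =>
      intro _
      rw [Nat.sub_zero, p.getVert_length]
    | succ t ih =>
      intro ht
      have hk : p.length - (t + 1) < p.length := by omega
      have hadj : T.Adj (p.getVert (p.length - (t + 1))) (p.getVert (p.length - (t + 1) + 1)) :=
        p.adj_getVert_succ hk
      have hne := hedge_ne (p.length - (t + 1)) hk (by omega)
      have h2 := ih (by omega)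
      rw [show p.length - t = p.length - (t + 1) + 1 by omega] at h2
      exact ((hT'_adj_of_T hadj hne).reachable).trans h2
  have reach_x_u : T'.Reachable x u := by
    have h := reach1 (i - 1) le_rfl
    rwa [← hx] at h
  have reach_y_v : T'.Reachable y v := by
    have h := reach2 (p.length - i) le_rfl
    rwa [show p.length - (p.length - i) = i by omega, ← hy] at h
  have reach_xy : T'.Reachable x y :=
    reach_x_u.trans (hT'_adj_uv.reachable.trans reach_y_v.symm)
  have hT'conn : T'.Connected := by
    rw [SimpleGraph.connected_iff]
    refine ⟨?_, ⟨vstar⟩⟩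
    intro a b
    obtain ⟨W⟩ := hconn.preconnected a b
    clear hends
    induction W with
    | nil => exact Reachable.refl _
    | @cons a' b' c' h q ih =>
      refine Reachable.trans ?_ ih
      by_cases hc : s(a', b') = s(x, y)
      · rw [Sym2.eq_iff] at hc
        rcases hc with ⟨h1, h2⟩ | ⟨h1, h2⟩
        · subst h1; subst h2; exact reach_xy
        · subst h1; subst h2; exact reach_xy.symm
      · exact (hT'_adj_of_T h hc).reachable
  -- pointwise comparison
  have key : ∀ w : V, T.dist vstar w ≤ T'.dist vstar w ∧
      (w = u → T.dist vstar w < T'.dist vstar w) := by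
    intro w
    obtain ⟨P, hP, hPl⟩ := hT'conn.exists_path_of_dist vstar w
    by_cases huvP : s(u, v) ∈ P.edges
    · -- the new edge is used: strict inequality
      have husup : u ∈ P.support := P.fst_mem_support_of_mem_edges huvP
      have hP1 : (P.takeUntil u husup).IsPath := hP.takeUntil husup
      have hPlen : (P.takeUntil u husup).length + (P.dropUntil u husup).length = P.length := by
        have h := congrArg Walk.length (P.take_spec husup)
        rwa [Walk.length_append] at h
      have huvP1 : s(u, v) ∈ (P.takeUntil u husup).edges := by
        by_contra hnc
        have hbr := bridge ((P.takeUntil u husup).transfer T (hsub_T _ hnc))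
        rw [Walk.edges_transfer] at hbr
        exact hf_not_in (P.takeUntil u husup) hbr
      have hvP1 : v ∈ (P.takeUntil u husup).support :=
        (P.takeUntil u husup).snd_mem_support_of_mem_edges huvP1
      have hQR : ((P.takeUntil u husup).takeUntil v hvP1).length +
          ((P.takeUntil u husup).dropUntil v hvP1).length = (P.takeUntil u husup).length := by
        have h := congrArg Walk.length ((P.takeUntil u husup).take_spec hvP1)
        rwa [Walk.length_append] at h
      have hRpos : 1 ≤ ((P.takeUntil u husup).dropUntil v hvP1).length := by
        rcases Nat.eq_zero_or_pos ((P.takeUntil u husup).dropUntil v hvP1).length with h0 | h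
        · exact absurd (Walk.eq_of_length_eq_zero h0).symm he.ne
        · exact h
      have hnQ : s(u, v) ∉ ((P.takeUntil u husup).takeUntil v hvP1).edges := by
        intro hmem
        have huQ : u ∈ ((P.takeUntil u husup).takeUntil v hvP1).support :=
          _root_.SimpleGraph.Walk.fst_mem_support_of_mem_edges _ hmem
        have hnodup := hP1.support_nodup
        rw [← (P.takeUntil u husup).take_spec hvP1, Walk.support_append] at hnodup
        have hdisj := List.disjoint_of_nodup_append hnodup
        have huR : u ∈ ((P.takeUntil u husup).dropUntil v hvP1).support.tail := by
          have hend := ((P.takeUntil u husup).dropUntil v hvP1).end_mem_support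
          rw [Walk.support_eq_cons] at hend
          rcases List.mem_cons.mp hend with h | h
          · exact absurd h he.ne
          · exact h
        exact hdisj huQ huR
      have hnP2 : s(u, v) ∉ (P.dropUntil u husup).edges := by
        intro hmem
        have hvP2 : v ∈ (P.dropUntil u husup).support :=
          _root_.SimpleGraph.Walk.snd_mem_support_of_mem_edges _ hmem
        have hnodup := hP.support_nodup
        rw [← P.take_spec husup, Walk.support_append] at hnodup
        have hdisj := List.disjoint_of_nodup_append hnodup
        have hvtail : v ∈ (P.dropUntil u husup).support.tail := by
          rw [Walk.support_eq_cons] at hvP2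
          rcases List.mem_cons.mp hvP2 with h | h
          · exact absurd h.symm he.ne
          · exact h
        exact hdisj hvP1 hvtail
      have hdv : T.dist vstar v ≤ ((P.takeUntil u husup).takeUntil v hvP1).length := by
        have h := SimpleGraph.dist_le (((P.takeUntil u husup).takeUntil v hvP1).transfer T
          (hsub_T _ hnQ))
        rwa [Walk.length_transfer] at h
      have hduw : T.dist u w ≤ (P.dropUntil u husup).length := by
        have h := SimpleGraph.dist_le ((P.dropUntil u husup).transfer T (hsub_T _ hnP2))
        rwa [Walk.length_transfer] at h
      have htri : T.dist vstar w ≤ T.dist vstar u + T.dist u w := hconn.dist_triangle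
      have hstrict : T.dist vstar w < T'.dist vstar w := by
        rw [← hPl]
        omega
      exact ⟨hstrict.le, fun _ => hstrict⟩
    · -- the new edge is unused: walk lives in T
      have hle : T.dist vstar w ≤ T'.dist vstar w := by
        have h := SimpleGraph.dist_le (P.transfer T (hsub_T P huvP))
        rwa [Walk.length_transfer, hPl] at h
      refine ⟨hle, ?_⟩
      rintro rfl
      exfalso
      have hbr := bridge (P.transfer T (hsub_T P huvP))
      rw [Walk.edges_transfer] at hbr
      exact hf_not_in P hbr
  exact Finset.sum_lt_sum (fun w _ => (key w).1) ⟨u, Finset.mem_univ u, (key u).2 rfl⟩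
end
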